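/- Let r ≥ 1 be an integer and n sufficiently large. Let G be a non-bipartite B_{r+1}-free simple graph on n vertices with e(G) ≥ ⌊(n−1)²/4⌋ + 2r, and let w₁w₂w₃ be a triangle in G with d*(w₁) ≥ d*(w₂) ≥ d*(w₃), where d*(w_i) denotes the number of neighbours of w_i outside {w₁, w₂, w₃}. Then d*(w₁) > n/3 − 2 and d*(w₂) ≥ n/4 − 1. -/

import Mathlib

open SimpleGraph Set Finset

/-- `G` contains no book `B_{r+1}`, i.e. no two adjacent vertices of `G` have at least
`r + 1` common neighbours. -/
def BookFree {V : Type*} (r : ℕ) (G : SimpleGraph V) : Prop :=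
  ∀ u v : V, G.Adj u v → ({w : V | G.Adj u w ∧ G.Adj v w}).ncard ≤ r

/-- `d_X(v)`: the number of neighbours of `v` lying in `X`. -/
noncomputable def degIn {V : Type*} (G : SimpleGraph V) (X : Set V) (v : V) : ℕ :=
  {w ∈ X | G.Adj v w}.ncard

/-- Edges of the induced graph on `(↑S)ᶜ` are exactly the edges not touching `S`. -/
lemma card_induce_compl_edges {V : Type} [Fintype V] [DecidableEq V]
    (G : SimpleGraph V) [DecidableRel G.Adj] (S : Finset V) :
    (G.induce ((↑S)ᶜ : Set V)).edgeSet.ncard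
      = #{e ∈ G.edgeFinset | ¬ ∃ v ∈ S, v ∈ e} := by
  classical
  rw [Set.ncard_eq_toFinset_card']
  apply Finset.card_bij (fun (e : Sym2 _) _ => Sym2.map Subtype.val e)
  · refine fun e he => ?_
    revert he
    refine Sym2.ind (fun a b he => ?_) e
    rw [Set.mem_toFinset, mem_edgeSet, comap_adj] at he
    simp only [Sym2.map_pair_eq, Finset.mem_filter, mem_edgeFinset, mem_edgeSet]
    refine ⟨he, ?_⟩
    rintro ⟨v, hv, hmem⟩
    rw [Sym2.mem_iff] at hmem
    rcases hmem with rfl | rfl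
    · exact a.2 (Finset.mem_coe.2 hv)
    · exact b.2 (Finset.mem_coe.2 hv)
  · exact fun e1 _ e2 _ h => Sym2.map.injective Subtype.val_injective h
  · refine fun e he => ?_
    revert he
    refine Sym2.ind (fun a b he => ?_) e
    simp only [Finset.mem_filter, mem_edgeFinset, mem_edgeSet, not_exists] at he
    obtain ⟨hadj, hnot⟩ := he
    have ha : a ∈ ((↑S)ᶜ : Set V) := fun h => hnot a ⟨Finset.mem_coe.1 h, by simp⟩
    have hb : b ∈ ((↑S)ᶜ : Set V) := fun h => hnot b ⟨Finset.mem_coe.1 h, by simp⟩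
    refine ⟨s(⟨a, ha⟩, ⟨b, hb⟩), ?_, by simp⟩
    rw [Set.mem_toFinset, mem_edgeSet, comap_adj]
    exact hadj

/-- Split: total edges = induced edges + touching edges. -/
lemma edge_split {V : Type} [Fintype V] [DecidableEq V]
    (G : SimpleGraph V) [DecidableRel G.Adj] (S : Finset V) :
    G.edgeSet.ncard
      = (G.induce ((↑S)ᶜ : Set V)).edgeSet.ncard + #{e ∈ G.edgeFinset | ∃ v ∈ S, v ∈ e} := by
  classical
  rw [Set.ncard_eq_toFinset_card', card_induce_compl_edges G S]
  have := Finset.card_filter_add_card_filter_not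
    (s := G.edgeFinset) (p := fun e => ∃ v ∈ S, v ∈ e)
  have h2 : (G.edgeSet.toFinset.card) = G.edgeFinset.card := rfl
  omega

lemma touch_pair {V : Type} [Fintype V] [DecidableEq V]
    (G : SimpleGraph V) [DecidableRel G.Adj] {u v : V} (huv : G.Adj u v) :
    #{e ∈ G.edgeFinset | ∃ w ∈ ({u, v} : Finset V), w ∈ e} + 1
      = G.degree u + G.degree v := by
  classical
  have hset : {e ∈ G.edgeFinset | ∃ w ∈ ({u, v} : Finset V), w ∈ e}
      = G.incidenceFinset u ∪ G.incidenceFinset v := by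
    ext e
    simp only [Finset.mem_filter, Finset.mem_union, mem_incidenceFinset,
      Finset.mem_insert, Finset.mem_singleton, mem_edgeFinset]
    constructor
    · rintro ⟨he, w, (rfl | rfl), hw⟩
      · exact Or.inl ⟨he, hw⟩
      · exact Or.inr ⟨he, hw⟩
    · rintro (⟨he, hw⟩ | ⟨he, hw⟩)
      · exact ⟨he, u, Or.inl rfl, hw⟩
      · exact ⟨he, v, Or.inr rfl, hw⟩
  have hinter : G.incidenceFinset u ∩ G.incidenceFinset v = {s(u, v)} := by
    have hs := G.incidenceSet_inter_incidenceSet_of_adj huv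
    ext e
    rw [Finset.mem_inter, mem_incidenceFinset, mem_incidenceFinset, Finset.mem_singleton,
      ← Set.mem_singleton_iff, ← hs, Set.mem_inter_iff]
  have hcard := Finset.card_union_add_card_inter (G.incidenceFinset u) (G.incidenceFinset v)
  rw [hinter, Finset.card_singleton, card_incidenceFinset_eq_degree,
    card_incidenceFinset_eq_degree] at hcard
  rw [hset]
  exact hcard

lemma touch_triple {V : Type} [Fintype V] [DecidableEq V]
    (G : SimpleGraph V) [DecidableRel G.Adj] {x y z : V}
    (hxy : G.Adj x y) (hyz : G.Adj y z) (hzx : G.Adj z x) :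
    #{e ∈ G.edgeFinset | ∃ w ∈ ({x, y, z} : Finset V), w ∈ e} + 3
      = G.degree x + G.degree y + G.degree z := by
  classical
  have hset : {e ∈ G.edgeFinset | ∃ w ∈ ({x, y, z} : Finset V), w ∈ e}
      = (G.incidenceFinset x ∪ G.incidenceFinset y) ∪ G.incidenceFinset z := by
    ext e
    simp only [Finset.mem_filter, Finset.mem_union, mem_incidenceFinset,
      Finset.mem_insert, Finset.mem_singleton, mem_edgeFinset]
    constructor
    · rintro ⟨he, w, (rfl | rfl | rfl), hw⟩
      · exact Or.inl (Or.inl ⟨he, hw⟩)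
      · exact Or.inl (Or.inr ⟨he, hw⟩)
      · exact Or.inr ⟨he, hw⟩
    · rintro ((⟨he, hw⟩ | ⟨he, hw⟩) | ⟨he, hw⟩)
      · exact ⟨he, x, by simp, hw⟩
      · exact ⟨he, y, by simp, hw⟩
      · exact ⟨he, z, by simp, hw⟩
  have hfin_inter : ∀ (a b : V), G.Adj a b →
      G.incidenceFinset a ∩ G.incidenceFinset b = {s(a, b)} := by
    intro a b hab
    have hs := G.incidenceSet_inter_incidenceSet_of_adj hab
    ext e
    rw [Finset.mem_inter, mem_incidenceFinset, mem_incidenceFinset, Finset.mem_singleton,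
      ← Set.mem_singleton_iff, ← hs, Set.mem_inter_iff]
  have h12 : #(G.incidenceFinset x ∪ G.incidenceFinset y) + 1 = G.degree x + G.degree y := by
    have hcard := Finset.card_union_add_card_inter (G.incidenceFinset x) (G.incidenceFinset y)
    rw [hfin_inter x y hxy, Finset.card_singleton, card_incidenceFinset_eq_degree,
      card_incidenceFinset_eq_degree] at hcard
    exact hcard
  have hdist : ((G.incidenceFinset x ∪ G.incidenceFinset y) ∩ G.incidenceFinset z)
      = {s(x, z)} ∪ {s(y, z)} := by
    rw [Finset.union_inter_distrib_right, hfin_inter x z hzx.symm, hfin_inter y z hyz]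
  have hne : s(x, z) ≠ s(y, z) := by
    intro h
    rw [Sym2.eq_iff] at h
    rcases h with ⟨h1, h2⟩ | ⟨h1, h2⟩
    · exact hxy.ne h1
    · exact hzx.ne h1.symm
  have hint2 : #((G.incidenceFinset x ∪ G.incidenceFinset y) ∩ G.incidenceFinset z) = 2 := by
    rw [hdist]
    rw [Finset.card_union_of_disjoint (Finset.disjoint_singleton.2 hne)]
    rfl
  have hcard := Finset.card_union_add_card_inter
    (G.incidenceFinset x ∪ G.incidenceFinset y) (G.incidenceFinset z)
  rw [hint2, card_incidenceFinset_eq_degree] at hcard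
  rw [hset]
  omega

lemma common_nbr_card {V : Type} [Fintype V] [DecidableEq V]
    {G : SimpleGraph V} [DecidableRel G.Adj] {r : ℕ} (hb : BookFree r G) {u v : V}
    (huv : G.Adj u v) :
    #(G.neighborFinset u ∩ G.neighborFinset v) ≤ r := by
  classical
  have h := hb u v huv
  rw [Set.ncard_eq_toFinset_card'] at h
  convert h using 2
  ext w
  simp [mem_neighborFinset, adj_comm]

lemma degsum_triple {V : Type} [Fintype V] [DecidableEq V]
    {G : SimpleGraph V} [DecidableRel G.Adj] {r : ℕ} (hb : BookFree r G) {x y z : V}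
    (hxy : G.Adj x y) (hyz : G.Adj y z) (hzx : G.Adj z x) :
    G.degree x + G.degree y + G.degree z ≤ Fintype.card V + 3 * r := by
  classical
  have h1 := Finset.card_union_add_card_inter (G.neighborFinset x) (G.neighborFinset y)
  have h2 := Finset.card_union_add_card_inter
    (G.neighborFinset x ∪ G.neighborFinset y) (G.neighborFinset z)
  have h3 : ((G.neighborFinset x ∪ G.neighborFinset y) ∩ G.neighborFinset z)
      = (G.neighborFinset x ∩ G.neighborFinset z) ∪ (G.neighborFinset y ∩ G.neighborFinset z) :=
    Finset.union_inter_distrib_right _ _ _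
  have h4 : #((G.neighborFinset x ∪ G.neighborFinset y) ∩ G.neighborFinset z) ≤ 2 * r := by
    rw [h3]
    calc _ ≤ #(G.neighborFinset x ∩ G.neighborFinset z)
          + #(G.neighborFinset y ∩ G.neighborFinset z) := Finset.card_union_le _ _
      _ ≤ r + r := Nat.add_le_add (common_nbr_card hb hzx.symm) (common_nbr_card hb hyz)
      _ = 2 * r := by ring
  have h5 : #(G.neighborFinset x ∩ G.neighborFinset y) ≤ r := common_nbr_card hb hxy
  have h6 : #(G.neighborFinset x ∪ G.neighborFinset y ∪ G.neighborFinset z) ≤ Fintype.card V :=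
    Finset.card_le_univ _
  have dx : #(G.neighborFinset x) = G.degree x := rfl
  have dy : #(G.neighborFinset y) = G.degree y := rfl
  have dz : #(G.neighborFinset z) = G.degree z := rfl
  omega

lemma degsum_pair_trianglefree {V : Type} [Fintype V] [DecidableEq V]
    {G : SimpleGraph V} [DecidableRel G.Adj] (hcf : G.CliqueFree 3) {u v : V}
    (huv : G.Adj u v) :
    G.degree u + G.degree v ≤ Fintype.card V := by
  classical
  have h1 := Finset.card_union_add_card_inter (G.neighborFinset u) (G.neighborFinset v)
  have h2 : G.neighborFinset u ∩ G.neighborFinset v = ∅ := by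
    rw [Finset.eq_empty_iff_forall_notMem]
    intro w hw
    rw [Finset.mem_inter, mem_neighborFinset, mem_neighborFinset] at hw
    exact hcf {u, v, w} (is3Clique_triple_iff.2 ⟨huv, hw.1, hw.2⟩)
  have h6 : #(G.neighborFinset u ∪ G.neighborFinset v) ≤ Fintype.card V :=
    Finset.card_le_univ _
  have du : #(G.neighborFinset u) = G.degree u := rfl
  have dv : #(G.neighborFinset v) = G.degree v := rfl
  rw [h2] at h1
  simp only [Finset.card_empty] at h1
  omega

lemma bookfree_induce {V : Type} {r : ℕ} {G : SimpleGraph V} (hb : BookFree r G)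
    (T : Set V) [Finite V] : BookFree r (G.induce T) := by
  intro u v huv
  rw [comap_adj] at huv
  calc ({w : T | (G.induce T).Adj u w ∧ (G.induce T).Adj v w}).ncard
      = ((Subtype.val : T → V) '' {w : T | (G.induce T).Adj u w ∧ (G.induce T).Adj v w}).ncard :=
        (Set.ncard_image_of_injective _ Subtype.val_injective).symm
    _ ≤ ({w : V | G.Adj ↑u w ∧ G.Adj ↑v w}).ncard := by
        apply Set.ncard_le_ncard
        · rintro _ ⟨w, ⟨h1, h2⟩, rfl⟩
          exact ⟨h1, h2⟩
        · exact Set.toFinite _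
    _ ≤ r := hb _ _ huv

lemma cliquefree_induce {V : Type} {G : SimpleGraph V} (hcf : G.CliqueFree 3)
    (T : Set V) : (G.induce T).CliqueFree 3 := by
  classical
  intro t ht
  rw [is3Clique_iff] at ht
  obtain ⟨a, b, c, hab, hac, hbc, -⟩ := ht
  rw [comap_adj] at hab hac hbc
  exact hcf {↑a, ↑b, ↑c} (is3Clique_triple_iff.2 ⟨hab, hac, hbc⟩)

lemma q_step (k : ℕ) : (k + 2) ^ 2 / 4 = k ^ 2 / 4 + (k + 1) := by
  obtain ⟨t, rfl | rfl⟩ := Nat.even_or_odd' k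
  · have h1 : (2 * t + 2) ^ 2 = (t + 1) ^ 2 * 4 := by ring
    have h2 : (2 * t) ^ 2 = t ^ 2 * 4 := by ring
    have h3 : (t + 1) ^ 2 = t ^ 2 + (2 * t + 1) := by ring
    rw [h1, h2, Nat.mul_div_cancel _ (by norm_num), Nat.mul_div_cancel _ (by norm_num), h3]
  · have h1 : (2 * t + 1 + 2) ^ 2 = (t ^ 2 + 3 * t + 2) * 4 + 1 := by ring
    have h2 : (2 * t + 1) ^ 2 = (t ^ 2 + t) * 4 + 1 := by ring
    rw [h1, h2]
    generalize t ^ 2 = a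
    omega

lemma card_coe_compl {V : Type} [Fintype V] [DecidableEq V] (S : Finset V) :
    Fintype.card ((↑S)ᶜ : Set V) = Fintype.card V - S.card := by
  classical
  have h1 : Fintype.card ((↑S)ᶜ : Set V) = ((↑S)ᶜ : Set V).toFinset.card :=
    (Set.toFinset_card _).symm
  have h2 : ((↑S)ᶜ : Set V).toFinset = Sᶜ := by ext x; simp
  rw [h1, h2, Finset.card_compl]

lemma mantel_aux : ∀ (m : ℕ) (V : Type) [Fintype V] [DecidableEq V]
    (G : SimpleGraph V) [DecidableRel G.Adj], Fintype.card V = m → G.CliqueFree 3 →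
    G.edgeSet.ncard ≤ m ^ 2 / 4 := by
  intro m
  induction m using Nat.strong_induction_on with
  | _ m ih =>
    intro V _ _ G _ hcard hcf
    classical
    rcases Finset.eq_empty_or_nonempty G.edgeFinset with he | ⟨e, he⟩
    · have : G.edgeSet.ncard = #G.edgeFinset := by rw [Set.ncard_eq_toFinset_card']; rfl
      simp [this, he]
    · revert he
      refine Sym2.ind (fun u v he => ?_) e
      have huv : G.Adj u v := by rwa [mem_edgeFinset, mem_edgeSet] at he
      have hne : u ≠ v := huv.ne
      have hS : ({u, v} : Finset V).card = 2 := by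
        rw [Finset.card_insert_of_notMem (by simp [hne]), Finset.card_singleton]
      have hm2 : 2 ≤ m := by
        rw [← hcard]
        calc 2 = ({u, v} : Finset V).card := hS.symm
          _ ≤ _ := Finset.card_le_univ _
      obtain ⟨k, rfl⟩ : ∃ k, m = k + 2 := ⟨m - 2, by omega⟩
      have hsplit := edge_split G ({u, v} : Finset V)
      have htouch := touch_pair G huv
      have hdeg := degsum_pair_trianglefree hcf huv
      have hcard' : Fintype.card ((↑({u, v} : Finset V))ᶜ : Set V) = k := by
        rw [card_coe_compl, hS, hcard]
        omega
      have hind : (G.induce ((↑({u, v} : Finset V))ᶜ : Set V)).edgeSet.ncard ≤ k ^ 2 / 4 :=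
        ih k (by omega) _ _ hcard' (cliquefree_induce hcf _)
      have hq := q_step k
      rw [hcard] at hdeg
      omega

noncomputable def Fr (r m : ℕ) : ℝ := (max 0 ((12 * (r : ℝ) + 12 - m) * ((m : ℝ) + 12))) / 12

lemma Fr_nonneg (r m : ℕ) : 0 ≤ Fr r m := by
  unfold Fr
  exact div_nonneg (le_max_left _ _) (by norm_num)

lemma Fr_eq_zero {r m : ℕ} (h : 12 * r + 12 ≤ m) : Fr r m = 0 := by
  unfold Fr
  have h' : (12 * (r : ℝ) + 12 - m) ≤ 0 := by
    have : ((12 * r + 12 : ℕ) : ℝ) ≤ (m : ℝ) := by exact_mod_cast h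
    push_cast at this
    linarith
  rw [max_eq_left (mul_nonpos_of_nonpos_of_nonneg h' (by positivity)), zero_div]

lemma Fkey (r k : ℕ) :
    (k : ℝ) ^ 2 / 4 + Fr r k + ((k : ℝ) + 3 + 3 * r - 3) ≤ ((k : ℝ) + 3) ^ 2 / 4 + Fr r (k + 3) := by
  unfold Fr
  have hx : (0 : ℝ) ≤ (k : ℝ) := Nat.cast_nonneg k
  have hcast : ((k + 3 : ℕ) : ℝ) = (k : ℝ) + 3 := by push_cast; ring
  rw [hcast]
  set x := (k : ℝ) with hxdef
  rcases le_or_gt x (12 * (r : ℝ) + 9) with h1 | h1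
  · rw [max_eq_right (mul_nonneg (by linarith) (by linarith)),
      max_eq_right (mul_nonneg (by linarith) (by linarith))]
    nlinarith
  · rcases le_or_gt x (12 * (r : ℝ) + 12) with h2 | h2
    · rw [max_eq_right (mul_nonneg (by linarith) (by linarith)),
        max_eq_left (mul_nonpos_of_nonpos_of_nonneg (by linarith) (by linarith))]
      nlinarith
    · rw [max_eq_left (mul_nonpos_of_nonpos_of_nonneg (by linarith) (by linarith)),
        max_eq_left (mul_nonpos_of_nonpos_of_nonneg (by linarith) (by linarith))]
      nlinarith

lemma bookfree_aux (r : ℕ) : ∀ (m : ℕ) (V : Type) [Fintype V] [DecidableEq V]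
    (G : SimpleGraph V) [DecidableRel G.Adj], Fintype.card V = m → BookFree r G →
    (G.edgeSet.ncard : ℝ) ≤ (m : ℝ) ^ 2 / 4 + Fr r m := by
  intro m
  induction m using Nat.strong_induction_on with
  | _ m ih =>
    intro V _ _ G _ hcard hb
    classical
    by_cases hcf : G.CliqueFree 3
    · have h := mantel_aux m V G hcard hcf
      have h2 : ((G.edgeSet.ncard : ℕ) : ℝ) ≤ ((m ^ 2 / 4 : ℕ) : ℝ) := by exact_mod_cast h
      have h3 : ((m ^ 2 / 4 : ℕ) : ℝ) ≤ (m : ℝ) ^ 2 / 4 := by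
        calc ((m ^ 2 / 4 : ℕ) : ℝ) ≤ ((m ^ 2 : ℕ) : ℝ) / ((4 : ℕ) : ℝ) := Nat.cast_div_le
          _ = (m : ℝ) ^ 2 / 4 := by push_cast; ring
      linarith [Fr_nonneg r m]
    · rw [CliqueFree] at hcf
      push_neg at hcf
      obtain ⟨t, ht⟩ := hcf
      rw [is3Clique_iff] at ht
      obtain ⟨a, b, c, hab, hac, hbc, -⟩ := ht
      have hS : ({a, b, c} : Finset V).card = 3 := by
        rw [Finset.card_insert_of_notMem (by simp [hab.ne, hac.ne]),
          Finset.card_insert_of_notMem (by simp [hbc.ne]), Finset.card_singleton]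
      have hm3 : 3 ≤ m := by
        rw [← hcard]
        calc 3 = ({a, b, c} : Finset V).card := hS.symm
          _ ≤ _ := Finset.card_le_univ _
      obtain ⟨k, rfl⟩ : ∃ k, m = k + 3 := ⟨m - 3, by omega⟩
      have hsplit := edge_split G ({a, b, c} : Finset V)
      have htouch := touch_triple G hab hbc hac.symm
      have hdeg := degsum_triple hb hab hbc hac.symm
      have hcard' : Fintype.card ((↑({a, b, c} : Finset V))ᶜ : Set V) = k := by
        rw [card_coe_compl, hS, hcard]
        omega
      have hind := ih k (by omega) _ (G.induce ((↑({a, b, c} : Finset V))ᶜ : Set V))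
        hcard' (bookfree_induce hb _)
      rw [hcard] at hdeg
      have hnat : G.edgeSet.ncard + 3
          ≤ (G.induce ((↑({a, b, c} : Finset V))ᶜ : Set V)).edgeSet.ncard + (k + 3 + 3 * r) := by
        omega
      have hkey := Fkey r k
      have hnat' : (G.edgeSet.ncard : ℝ)
          ≤ ((G.induce ((↑({a, b, c} : Finset V))ᶜ : Set V)).edgeSet.ncard : ℝ)
            + ((k : ℝ) + 3 + 3 * r - 3) := by
        have := (Nat.cast_le (α := ℝ)).2 hnat
        push_cast at this
        linarith
      push_cast
      linarith

lemma bookfree_edge_bound {r : ℕ} {V : Type} [Fintype V] (G : SimpleGraph V)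
    (hb : BookFree r G) (hm : 12 * r + 12 ≤ Fintype.card V) :
    (G.edgeSet.ncard : ℝ) ≤ (Fintype.card V : ℝ) ^ 2 / 4 := by
  classical
  have := bookfree_aux r (Fintype.card V) V G rfl hb
  rwa [Fr_eq_zero hm, add_zero] at this

lemma degIn_split {V : Type} [Fintype V] [DecidableEq V] (G : SimpleGraph V)
    [DecidableRel G.Adj] (v : V) (S : Finset V) :
    degIn G ((↑S)ᶜ : Set V) v + #(G.neighborFinset v ∩ S) = G.degree v := by
  classical
  have h1 : degIn G ((↑S)ᶜ : Set V) v = #(G.neighborFinset v ∩ Sᶜ) := by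
    unfold degIn
    rw [Set.ncard_eq_toFinset_card']
    congr 1
    ext w
    simp only [Set.mem_toFinset, Set.mem_setOf_eq, Finset.mem_inter, mem_neighborFinset,
      Finset.mem_compl, Set.mem_compl_iff, Finset.mem_coe]
    tauto
  have h2 : (G.neighborFinset v ∩ Sᶜ) = (G.neighborFinset v).filter (fun w => ¬ w ∈ S) := by
    ext w
    simp [Finset.mem_filter]
  have h3 : (G.neighborFinset v ∩ S) = (G.neighborFinset v).filter (fun w => w ∈ S) := by
    ext w
    simp [Finset.mem_filter]
  rw [h1, h2, h3, add_comm, Finset.card_filter_add_card_filter_not,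
    card_neighborFinset_eq_degree]

lemma sq_div4_lb (p : ℕ) : p ^ 2 ≤ 4 * (p ^ 2 / 4) + 1 := by
  obtain ⟨t, rfl | rfl⟩ := Nat.even_or_odd' p
  · have h : (2 * t) ^ 2 = t ^ 2 * 4 := by ring
    rw [h]
    generalize t ^ 2 = a
    omega
  · have h : (2 * t + 1) ^ 2 = (t ^ 2 + t) * 4 + 1 := by ring
    rw [h]
    generalize t ^ 2 = a
    omega

/-- Let `r ≥ 1` and `n` sufficiently large.  If `G` is a non-bipartite `B_{r+1}`-free graph
on `n` vertices with `e(G) ≥ ⌊(n-1)²/4⌋ + 2r` and `w₁w₂w₃` is a triangle in `G` with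
`d*(w₁) ≥ d*(w₂) ≥ d*(w₃)`, where `d*(wᵢ)` is the number of neighbours of `wᵢ` outside
`{w₁, w₂, w₃}`, then `d*(w₁) > n/3 - 2` and `d*(w₂) ≥ n/4 - 1`. -/
theorem stmt_14 (r : ℕ) (hr : 1 ≤ r) :
    ∃ n₀ : ℕ, ∀ n : ℕ, n₀ ≤ n →
      ∀ G : SimpleGraph (Fin n), ¬ G.Colorable 2 → BookFree r G →
        (n - 1) ^ 2 / 4 + 2 * r ≤ G.edgeSet.ncard →
        ∀ w1 w2 w3 : Fin n, G.Adj w1 w2 → G.Adj w2 w3 → G.Adj w3 w1 →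
          degIn G ({w1, w2, w3}ᶜ) w2 ≤ degIn G ({w1, w2, w3}ᶜ) w1 →
          degIn G ({w1, w2, w3}ᶜ) w3 ≤ degIn G ({w1, w2, w3}ᶜ) w2 →
          (n : ℝ) / 3 - 2 < (degIn G ({w1, w2, w3}ᶜ) w1 : ℝ) ∧
          (n : ℝ) / 4 - 1 ≤ (degIn G ({w1, w2, w3}ᶜ) w2 : ℝ) := by
  classical
  refine ⟨12 * r + 15, ?_⟩
  intro n hn G _hcol hb hE w1 w2 w3 h12 h23 h31 hd21 hd32
  have hne12 : w1 ≠ w2 := h12.ne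
  have hne23 : w2 ≠ w3 := h23.ne
  have hne31 : w3 ≠ w1 := h31.ne
  have hn15 : 12 * r + 15 ≤ n := hn
  -- finset versions of the deleted sets
  have hSset : ((↑({w1, w2, w3} : Finset (Fin n)) : Set (Fin n))) = ({w1, w2, w3} : Set (Fin n)) := by
    simp
  have hS3card : ({w1, w2, w3} : Finset (Fin n)).card = 3 := by
    rw [Finset.card_insert_of_notMem (by simp [hne12, hne31.symm]),
      Finset.card_insert_of_notMem (by simp [hne23]), Finset.card_singleton]
  have hPfcard : ({w2, w3} : Finset (Fin n)).card = 2 := Finset.card_pair hne23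
  rw [← hSset] at hd21 hd32 ⊢
  -- neighbours inside the triangle
  have hnb : ∀ v a b : Fin n, a ≠ b →
      G.neighborFinset v ∩ ({w1, w2, w3} : Finset (Fin n)) = {a, b} →
      degIn G ((↑({w1, w2, w3} : Finset (Fin n)))ᶜ : Set (Fin n)) v + 2 = G.degree v := by
    intro v a b hab heq
    have h := degIn_split G v ({w1, w2, w3} : Finset (Fin n))
    rw [heq, Finset.card_pair hab] at h
    exact h
  have hmem : ∀ v a b : Fin n, v = w1 ∧ a = w2 ∧ b = w3 ∨ v = w2 ∧ a = w1 ∧ b = w3 ∨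
      v = w3 ∧ a = w1 ∧ b = w2 → G.Adj v a → G.Adj v b →
      G.neighborFinset v ∩ ({w1, w2, w3} : Finset (Fin n)) = {a, b} := by
    intro v a b hcase hva hvb
    ext w
    rw [Finset.mem_inter, mem_neighborFinset]
    simp only [Finset.mem_insert, Finset.mem_singleton]
    constructor
    · rintro ⟨hadj, hm⟩
      rcases hcase with ⟨hv, ha, hb⟩ | ⟨hv, ha, hb⟩ | ⟨hv, ha, hb⟩ <;> subst hv <;> subst ha <;>
        subst hb <;>
        rcases hm with h | h | h <;> subst h <;> first
          | exact absurd hadj G.irrefl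
          | exact Or.inl rfl
          | exact Or.inr rfl
    · rintro (h | h) <;> subst h
      · refine ⟨hva, ?_⟩
        rcases hcase with ⟨hv, ha, hb⟩ | ⟨hv, ha, hb⟩ | ⟨hv, ha, hb⟩ <;> subst ha <;> simp
      · refine ⟨hvb, ?_⟩
        rcases hcase with ⟨hv, ha, hb⟩ | ⟨hv, ha, hb⟩ | ⟨hv, ha, hb⟩ <;> subst hb <;> simp
  have hdeg1 : degIn G ((↑({w1, w2, w3} : Finset (Fin n)))ᶜ : Set (Fin n)) w1 + 2
      = G.degree w1 :=
    hnb w1 w2 w3 hne23 (hmem w1 w2 w3 (Or.inl ⟨rfl, rfl, rfl⟩) h12 h31.symm)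
  have hdeg2 : degIn G ((↑({w1, w2, w3} : Finset (Fin n)))ᶜ : Set (Fin n)) w2 + 2
      = G.degree w2 :=
    hnb w2 w1 w3 (fun h => hne31 h.symm) (hmem w2 w1 w3 (Or.inr (Or.inl ⟨rfl, rfl, rfl⟩))
      h12.symm h23)
  have hdeg3 : degIn G ((↑({w1, w2, w3} : Finset (Fin n)))ᶜ : Set (Fin n)) w3 + 2
      = G.degree w3 :=
    hnb w3 w1 w2 hne12 (hmem w3 w1 w2 (Or.inr (Or.inr ⟨rfl, rfl, rfl⟩)) h31 h23.symm)
  -- deletion of the triangle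
  have hsplit3 := edge_split G ({w1, w2, w3} : Finset (Fin n))
  have htouch3 := touch_triple G h12 h23 h31
  have hcard3 : Fintype.card ((↑({w1, w2, w3} : Finset (Fin n)))ᶜ : Set (Fin n)) = n - 3 := by
    rw [card_coe_compl, hS3card, Fintype.card_fin]
  have hbound3 : ((G.induce ((↑({w1, w2, w3} : Finset (Fin n)))ᶜ : Set (Fin n))).edgeSet.ncard : ℝ)
      ≤ ((n : ℝ) - 3) ^ 2 / 4 := by
    have h := bookfree_edge_bound
      (G.induce ((↑({w1, w2, w3} : Finset (Fin n)))ᶜ : Set (Fin n)))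
      (bookfree_induce hb _) (by rw [hcard3]; omega)
    rw [hcard3] at h
    have hc : ((n - 3 : ℕ) : ℝ) = (n : ℝ) - 3 := by
      rw [Nat.cast_sub (by omega)]
      norm_num
    rwa [hc] at h
  -- deletion of the pair {w2, w3}
  have hsplit2 := edge_split G ({w2, w3} : Finset (Fin n))
  have htouch2 := touch_pair G h23
  have hcard2 : Fintype.card ((↑({w2, w3} : Finset (Fin n)))ᶜ : Set (Fin n)) = n - 2 := by
    rw [card_coe_compl, hPfcard, Fintype.card_fin]
  have hbound2 : ((G.induce ((↑({w2, w3} : Finset (Fin n)))ᶜ : Set (Fin n))).edgeSet.ncard : ℝ)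
      ≤ ((n : ℝ) - 2) ^ 2 / 4 := by
    have h := bookfree_edge_bound
      (G.induce ((↑({w2, w3} : Finset (Fin n)))ᶜ : Set (Fin n)))
      (bookfree_induce hb _) (by rw [hcard2]; omega)
    rw [hcard2] at h
    have hc : ((n - 2 : ℕ) : ℝ) = (n : ℝ) - 2 := by
      rw [Nat.cast_sub (by omega)]
      norm_num
    rwa [hc] at h
  -- lower bound on the number of edges
  have hEreal : ((n : ℝ) - 1) ^ 2 / 4 - 1 / 4 + 2 * r ≤ (G.edgeSet.ncard : ℝ) := by
    have h1 := sq_div4_lb (n - 1)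
    have h3 : (((n - 1) ^ 2 / 4 : ℕ) : ℝ) + 2 * r ≤ (G.edgeSet.ncard : ℝ) := by
      exact_mod_cast hE
    have h4 : (((n - 1) ^ 2 : ℕ) : ℝ) ≤ 4 * (((n - 1) ^ 2 / 4 : ℕ) : ℝ) + 1 := by
      exact_mod_cast h1
    have h5 : ((n - 1 : ℕ) : ℝ) = (n : ℝ) - 1 := by
      rw [Nat.cast_sub (by omega)]
      norm_num
    rw [show (((n - 1) ^ 2 : ℕ) : ℝ) = ((n - 1 : ℕ) : ℝ) ^ 2 by push_cast; ring, h5] at h4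
    linarith
  -- nat identities and the final computation
  have hnat3 : G.edgeSet.ncard + 3
      = (G.induce ((↑({w1, w2, w3} : Finset (Fin n)))ᶜ : Set (Fin n))).edgeSet.ncard
        + (degIn G ((↑({w1, w2, w3} : Finset (Fin n)))ᶜ : Set (Fin n)) w1
          + degIn G ((↑({w1, w2, w3} : Finset (Fin n)))ᶜ : Set (Fin n)) w2
          + degIn G ((↑({w1, w2, w3} : Finset (Fin n)))ᶜ : Set (Fin n)) w3) + 6 := by
    omega
  have hnat2 : G.edgeSet.ncard + 1
      = (G.induce ((↑({w2, w3} : Finset (Fin n)))ᶜ : Set (Fin n))).edgeSet.ncard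
        + (degIn G ((↑({w1, w2, w3} : Finset (Fin n)))ᶜ : Set (Fin n)) w2
          + degIn G ((↑({w1, w2, w3} : Finset (Fin n)))ᶜ : Set (Fin n)) w3) + 4 := by
    omega
  have hreal3 : (G.edgeSet.ncard : ℝ) + 3
      = ((G.induce ((↑({w1, w2, w3} : Finset (Fin n)))ᶜ : Set (Fin n))).edgeSet.ncard : ℝ)
        + ((degIn G ((↑({w1, w2, w3} : Finset (Fin n)))ᶜ : Set (Fin n)) w1 : ℝ)
          + (degIn G ((↑({w1, w2, w3} : Finset (Fin n)))ᶜ : Set (Fin n)) w2 : ℝ)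
          + (degIn G ((↑({w1, w2, w3} : Finset (Fin n)))ᶜ : Set (Fin n)) w3 : ℝ)) + 6 := by
    exact_mod_cast hnat3
  have hreal2 : (G.edgeSet.ncard : ℝ) + 1
      = ((G.induce ((↑({w2, w3} : Finset (Fin n)))ᶜ : Set (Fin n))).edgeSet.ncard : ℝ)
        + ((degIn G ((↑({w1, w2, w3} : Finset (Fin n)))ᶜ : Set (Fin n)) w2 : ℝ)
          + (degIn G ((↑({w1, w2, w3} : Finset (Fin n)))ᶜ : Set (Fin n)) w3 : ℝ)) + 4 := by
    exact_mod_cast hnat2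
  have hd21' : (degIn G ((↑({w1, w2, w3} : Finset (Fin n)))ᶜ : Set (Fin n)) w2 : ℝ)
      ≤ degIn G ((↑({w1, w2, w3} : Finset (Fin n)))ᶜ : Set (Fin n)) w1 := by
    exact_mod_cast hd21
  have hd32' : (degIn G ((↑({w1, w2, w3} : Finset (Fin n)))ᶜ : Set (Fin n)) w3 : ℝ)
      ≤ degIn G ((↑({w1, w2, w3} : Finset (Fin n)))ᶜ : Set (Fin n)) w2 := by
    exact_mod_cast hd32
  have hr' : (1 : ℝ) ≤ r := by exact_mod_cast hr
  have hn' : (12 * (r : ℝ) + 15 : ℝ) ≤ n := by exact_mod_cast hn15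
  have hsq1 : ((n : ℝ) - 1) ^ 2 = (n : ℝ) ^ 2 - 2 * n + 1 := by ring
  have hsq2 : ((n : ℝ) - 2) ^ 2 = (n : ℝ) ^ 2 - 4 * n + 4 := by ring
  have hsq3 : ((n : ℝ) - 3) ^ 2 = (n : ℝ) ^ 2 - 6 * n + 9 := by ring
  constructor
  · linarith
  · linarith
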